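/- Let A be an invertible n×n real matrix and let D be a diagonal matrix with diagonal entries in {−1, 1}. If ‖|A⁻¹|‖ < 1 for a monotone matrix norm ‖·‖ (where |A⁻¹| is the entrywise absolute value), then A − D is invertible and ‖(A − D)⁻¹‖ ≤ ‖A⁻¹‖ / (1 − ‖|A⁻¹|‖). -/

import Mathlib

theorem stmt_4 (n : ℕ) (A : Matrix (Fin n) (Fin n) ℝ) (hA : IsUnit A)
    (N : RingNorm (Matrix (Fin n) (Fin n) ℝ))
    (hmono : ∀ B C : Matrix (Fin n) (Fin n) ℝ, (∀ i j, |B i j| ≤ C i j) → N B ≤ N C)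
    (d : Fin n → ℝ) (hd : ∀ i, |d i| = 1)
    (habs : N (Matrix.of fun i j => |A⁻¹ i j|) < 1) :
    IsUnit (A - Matrix.diagonal d) ∧
      N (A - Matrix.diagonal d)⁻¹ ≤ N A⁻¹ / (1 - N (Matrix.of fun i j => |A⁻¹ i j|)) := by
  classical
  set D := Matrix.diagonal d with hD
  set B := A⁻¹ * D with hB
  set M : Matrix (Fin n) (Fin n) ℝ := Matrix.of fun i j => |A⁻¹ i j| with hM
  have hdet : IsUnit A.det := (Matrix.isUnit_iff_isUnit_det A).mp hA
  have hAinvA : A⁻¹ * A = 1 := Matrix.nonsing_inv_mul A hdet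
  have hBabs : ∀ i j, |B i j| = M i j := by
    intro i j
    simp [hB, hD, Matrix.mul_diagonal, abs_mul, hd j, hM]
  have hMnonneg : ∀ i j, (0:ℝ) ≤ M i j := fun i j => abs_nonneg _
  have hpow : ∀ k, (∀ i j, (0:ℝ) ≤ (M^k) i j) ∧ (∀ i j, |(B^k) i j| ≤ (M^k) i j) := by
    intro k
    induction k with
    | zero =>
      constructor <;> intro i j <;> simp [Matrix.one_apply] <;> split <;> simp
    | succ k ih =>
      obtain ⟨h1, h2⟩ := ih
      constructor
      · intro i j
        rw [pow_succ', Matrix.mul_apply]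
        exact Finset.sum_nonneg fun l _ => mul_nonneg (hMnonneg i l) (h1 l j)
      · intro i j
        rw [pow_succ', pow_succ', Matrix.mul_apply, Matrix.mul_apply]
        calc |∑ l, B i l * (B^k) l j| ≤ ∑ l, |B i l * (B^k) l j| :=
              Finset.abs_sum_le_sum_abs _ _
          _ ≤ ∑ l, M i l * (M^k) l j := by
              apply Finset.sum_le_sum
              intro l _
              rw [abs_mul]
              exact mul_le_mul (hBabs i l).le (h2 l j) (abs_nonneg _) (hMnonneg i l)
  have hNpow : ∀ k, N (M^(k+1)) ≤ (N M)^(k+1) := by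
    intro k
    induction k with
    | zero => simp [pow_one]
    | succ k ih =>
      calc N (M^(k+2)) = N (M * M^(k+1)) := by rw [← pow_succ']
        _ ≤ N M * N (M^(k+1)) := map_mul_le_mul N _ _
        _ ≤ N M * (N M)^(k+1) := by
            exact mul_le_mul_of_nonneg_left ih (apply_nonneg N M)
        _ = (N M)^(k+2) := by ring
  have key : IsUnit (A - D) := by
    have hdetne : (A - D).det ≠ 0 := by
      intro h0
      obtain ⟨x, hx0, hx⟩ := (Matrix.exists_mulVec_eq_zero_iff).mpr h0
      have hfix : x = B.mulVec x := by
        have h1 : A.mulVec x = D.mulVec x := by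
          rw [Matrix.sub_mulVec, sub_eq_zero] at hx
          exact hx
        calc x = (A⁻¹ * A).mulVec x := by rw [hAinvA, Matrix.one_mulVec]
          _ = A⁻¹.mulVec (A.mulVec x) := by rw [← Matrix.mulVec_mulVec]
          _ = A⁻¹.mulVec (D.mulVec x) := by rw [h1]
          _ = B.mulVec x := by rw [Matrix.mulVec_mulVec]
      have hfixk : ∀ k, x = (B^k).mulVec x := by
        intro k
        induction k with
        | zero => simp [Matrix.one_mulVec]
        | succ k ih =>
          rw [pow_succ', ← Matrix.mulVec_mulVec, ← ih, ← hfix]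
      obtain ⟨iw, hiw⟩ := Function.ne_iff.mp hx0
      haveI : Nonempty (Fin n) := ⟨iw⟩
      obtain ⟨i0, hi0⟩ := Finite.exists_max fun i => |x i|
      have hm : 0 < |x i0| := by
        exact lt_of_lt_of_le (abs_pos.mpr (by simpa using hiw)) (hi0 iw)
      have hnpos : 0 < n := i0.pos
      have hsum : ∀ k, (1:ℝ) ≤ ∑ j, (M^k) i0 j := by
        intro k
        have h1 : |x i0| ≤ (∑ j, (M^k) i0 j) * |x i0| := by
          have hxi : x i0 = ∑ j, (B^k) i0 j * x j := by
            conv_lhs => rw [hfixk k]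
            simp [Matrix.mulVec, dotProduct]
          calc |x i0| = |∑ j, (B^k) i0 j * x j| := congrArg abs hxi
            _ ≤ ∑ j, |(B^k) i0 j * x j| := Finset.abs_sum_le_sum_abs _ _
            _ ≤ ∑ j, (M^k) i0 j * |x i0| := by
                apply Finset.sum_le_sum
                intro j _
                rw [abs_mul]
                exact mul_le_mul ((hpow k).2 i0 j) (hi0 j) (abs_nonneg _) ((hpow k).1 i0 j)
            _ = (∑ j, (M^k) i0 j) * |x i0| := (Finset.sum_mul _ _ _).symm
        nth_rewrite 1 [← one_mul (|x i0|)] at h1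
        exact (mul_le_mul_iff_of_pos_right hm).mp h1
      set ε := Finset.univ.inf' (⟨i0, Finset.mem_univ i0⟩ : (Finset.univ : Finset (Fin n)).Nonempty)
        (fun j => N (Matrix.single i0 j ((n:ℝ)⁻¹))) with hε
      have hninv : (0:ℝ) < (n:ℝ)⁻¹ := by positivity
      have hεpos : 0 < ε := by
        rw [hε]
        refine (Finset.lt_inf'_iff _).2 ?_
        intro j _
        apply map_pos_of_ne_zero
        intro h
        have := congrFun (congrFun h i0) j
        simp [Matrix.single_apply_same] at this
        exact hninv.ne' (by simpa using this)
      obtain ⟨k0, hk0⟩ := exists_pow_lt_of_lt_one hεpos habs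
      have hk1 : (N M)^(k0+1) < ε := by
        calc (N M)^(k0+1) = (N M)^k0 * N M := pow_succ _ _
          _ ≤ (N M)^k0 * 1 := by
              exact mul_le_mul_of_nonneg_left habs.le (pow_nonneg (apply_nonneg N M) k0)
          _ = (N M)^k0 := mul_one _
          _ < ε := hk0
      obtain ⟨j, hj⟩ : ∃ j, (n:ℝ)⁻¹ ≤ (M^(k0+1)) i0 j := by
        by_contra h
        push_neg at h
        have hlt : ∑ j, (M^(k0+1)) i0 j < ∑ _j : Fin n, (n:ℝ)⁻¹ :=
          Finset.sum_lt_sum_of_nonempty ⟨i0, Finset.mem_univ i0⟩ fun j _ => h j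
        rw [Finset.sum_const, Finset.card_univ, Fintype.card_fin, nsmul_eq_mul,
          mul_inv_cancel₀ (by exact_mod_cast hnpos.ne' : (n:ℝ) ≠ 0)] at hlt
        exact absurd (hsum (k0+1)) (not_le.mpr hlt)
      have hle : N (Matrix.single i0 j ((n:ℝ)⁻¹)) ≤ N (M^(k0+1)) := by
        apply hmono
        intro i' j'
        rw [Matrix.single]
        simp only [Matrix.of_apply]
        split
        · next hc =>
            obtain ⟨rfl, rfl⟩ := hc
            rw [abs_of_pos hninv]
            exact hj
        · simpa using (hpow (k0+1)).1 i' j'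
      have hεle : ε ≤ N (Matrix.single i0 j ((n:ℝ)⁻¹)) :=
        Finset.inf'_le _ (Finset.mem_univ j)
      linarith [hNpow k0, hle]
    exact (Matrix.isUnit_iff_isUnit_det _).mpr (isUnit_iff_ne_zero.mpr hdetne)
  refine ⟨key, ?_⟩
  have hdet2 : IsUnit (A - D).det := (Matrix.isUnit_iff_isUnit_det _).mp key
  set X := (A - D)⁻¹ with hX
  have hXinv : (A - D) * X = 1 := Matrix.mul_nonsing_inv _ hdet2
  have hAX : A * X = 1 + D * X := by
    rw [Matrix.sub_mul, sub_eq_iff_eq_add] at hXinv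
    exact hXinv
  have hXeq : X = A⁻¹ + B * X := by
    calc X = (A⁻¹ * A) * X := by rw [hAinvA, one_mul]
      _ = A⁻¹ * (A * X) := by rw [mul_assoc]
      _ = A⁻¹ * (1 + D * X) := by rw [hAX]
      _ = A⁻¹ + (A⁻¹ * D) * X := by rw [mul_add, mul_one, mul_assoc]
      _ = A⁻¹ + B * X := by rw [hB]
  have hNB : N B ≤ N M := hmono B M fun i j => (hBabs i j).le
  have hbound : N X ≤ N A⁻¹ + N M * N X := by
    calc N X = N (A⁻¹ + B * X) := by rw [← hXeq]
      _ ≤ N A⁻¹ + N (B * X) := map_add_le_add N _ _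
      _ ≤ N A⁻¹ + N B * N X := by
          exact add_le_add_right (map_mul_le_mul N _ _) _
      _ ≤ N A⁻¹ + N M * N X := by
          exact add_le_add_right (mul_le_mul_of_nonneg_right hNB (apply_nonneg N X)) _
  have h1α : 0 < 1 - N M := by linarith
  rw [le_div_iff₀ h1α]
  nlinarith [hbound]
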